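/- Let U ⊆ ℂ^n be open with u_a ≠ u_b for every u ∈ U and all a ≠ b. Let B_1,…,B_n : U → M_n(ℂ) and γ_1,…,γ_n : U → M_n(ℂ) be differentiable, and let G : U → GL_n(ℂ) be differentiable with ∂_j G = γ_j G on U for every j. Set B̂_k := G^{-1} B_k G. Then the pair (B_k, γ_k) satisfies the non-normalized Schlesinger equations, i.e. ∂_i B_k = [B_i, B_k]/(u_i − u_k) + [γ_i, B_k] for i ≠ k and ∂_i B_i = −∑_{k≠i} [B_i, B_k]/(u_i − u_k) + [γ_i, B_i] for every i, if and only if the matrices B̂_k satisfy the normalized Schlesinger equations ∂_i B̂_k = [B̂_i, B̂_k]/(u_i − u_k) for i ≠ k and ∂_i B̂_i = −∑_{k≠i} [B̂_i, B̂_k]/(u_i − u_k) for every i. -/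

import Mathlib

/-- The complex partial derivative `∂_j f` in the `j`-th coordinate. -/
noncomputable def pd {n : ℕ} (j : Fin n) (f : (Fin n → ℂ) → ℂ) (u : Fin n → ℂ) : ℂ :=
  fderiv ℂ f u (Pi.single j 1)

/-- Entrywise partial derivative `∂_j A` of a matrix-valued map. -/
noncomputable def mpd {n : ℕ} (j : Fin n) (A : (Fin n → ℂ) → Matrix (Fin n) (Fin n) ℂ)
    (u : Fin n → ℂ) : Matrix (Fin n) (Fin n) ℂ :=
  Matrix.of fun a b => pd j (fun v => A v a b) u

section helpers
variable {n m : ℕ}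

lemma diffAt_finprod {ι : Type*} (s : Finset ι) (g : ι → (Fin n → ℂ) → ℂ) {u : Fin n → ℂ}
    (h : ∀ i ∈ s, DifferentiableAt ℂ (g i) u) :
    DifferentiableAt ℂ (fun v => ∏ i ∈ s, g i v) u := by
  classical
  induction s using Finset.induction with
  | empty => simpa using differentiableAt_const (1 : ℂ)
  | @insert a s ha ih =>
    simp only [Finset.prod_insert ha]
    exact (h a (Finset.mem_insert_self a s)).mul
      (ih fun i hi => h i (Finset.mem_insert_of_mem hi))

lemma diffAt_det (M : (Fin n → ℂ) → Matrix (Fin m) (Fin m) ℂ) {u : Fin n → ℂ}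
    (h : ∀ a b, DifferentiableAt ℂ (fun v => M v a b) u) :
    DifferentiableAt ℂ (fun v => (M v).det) u := by
  simp only [Matrix.det_apply']
  exact DifferentiableAt.fun_sum fun σ _ =>
    (differentiableAt_const _).mul (diffAt_finprod _ _ fun i _ => h _ _)

lemma diffAt_inv_entry (G : (Fin n → ℂ) → Matrix (Fin m) (Fin m) ℂ) {u : Fin n → ℂ}
    (h : ∀ a b, DifferentiableAt ℂ (fun v => G v a b) u) (hu : IsUnit (G u)) (a b : Fin m) :
    DifferentiableAt ℂ (fun v => (G v)⁻¹ a b) u := by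
  have hdet : (G u).det ≠ 0 := by
    have := (Matrix.isUnit_iff_isUnit_det _).mp hu
    exact IsUnit.ne_zero this
  have heq : (fun v => (G v)⁻¹ a b) = fun v => ((G v).det)⁻¹ * (G v).adjugate a b := by
    funext v
    rw [Matrix.inv_def, Matrix.smul_apply, Ring.inverse_eq_inv, smul_eq_mul]
  rw [heq]
  have hadj : DifferentiableAt ℂ (fun v => (G v).adjugate a b) u := by
    simp only [Matrix.adjugate_apply]
    apply diffAt_det
    intro c d
    simp only [Matrix.updateRow_apply]
    by_cases hc : c = b
    · simp [hc]
    · simpa [hc] using h c d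
  exact ((diffAt_det G h).inv hdet).mul hadj

lemma diffAt_mul_entry (A B : (Fin n → ℂ) → Matrix (Fin m) (Fin m) ℂ) {u : Fin n → ℂ}
    (hA : ∀ a b, DifferentiableAt ℂ (fun v => A v a b) u)
    (hB : ∀ a b, DifferentiableAt ℂ (fun v => B v a b) u) (a b : Fin m) :
    DifferentiableAt ℂ (fun v => (A v * B v) a b) u := by
  simp only [Matrix.mul_apply]
  exact DifferentiableAt.fun_sum fun c _ => (hA a c).mul (hB c b)

lemma mpd_mul (j : Fin n) (A B : (Fin n → ℂ) → Matrix (Fin n) (Fin n) ℂ) {u : Fin n → ℂ}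
    (hA : ∀ a b, DifferentiableAt ℂ (fun v => A v a b) u)
    (hB : ∀ a b, DifferentiableAt ℂ (fun v => B v a b) u) :
    mpd j (fun v => A v * B v) u = mpd j A u * B u + A u * mpd j B u := by
  ext a b
  simp only [mpd, Matrix.of_apply, Matrix.add_apply, Matrix.mul_apply, pd]
  rw [fderiv_fun_sum (A := fun c v => A v a c * B v c b) fun c _ => (hA a c).mul (hB c b)]
  rw [ContinuousLinearMap.sum_apply]
  have h2 : ∀ c : Fin n,
      (fderiv ℂ (fun v => A v a c * B v c b) u) (Pi.single j 1)
        = fderiv ℂ (fun v => A v a c) u (Pi.single j 1) * B u c b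
          + A u a c * fderiv ℂ (fun v => B v c b) u (Pi.single j 1) := by
    intro c
    rw [fderiv_fun_mul (hA a c) (hB c b)]
    simp [mul_comm, add_comm]
  simp only [h2]
  rw [Finset.sum_add_distrib]

lemma mpd_congr (j : Fin n) (A B : (Fin n → ℂ) → Matrix (Fin n) (Fin n) ℂ) {u : Fin n → ℂ}
    {U : Set (Fin n → ℂ)} (hU : IsOpen U) (hu : u ∈ U) (h : ∀ v ∈ U, A v = B v) :
    mpd j A u = mpd j B u := by
  ext a b
  simp only [mpd, Matrix.of_apply, pd]
  have : (fun v => A v a b) =ᶠ[nhds u] fun v => B v a b :=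
    Filter.eventually_iff_exists_mem.mpr ⟨U, hU.mem_nhds hu, fun v hv => show A v a b = B v a b by rw [h v hv]⟩
  rw [this.fderiv_eq]

end helpers

lemma matConjMul {m : ℕ} (g gi X Y : Matrix (Fin m) (Fin m) ℂ) (h : g * gi = 1) :
    (gi * X * g) * (gi * Y * g) = gi * (X * Y) * g := by
  simp only [Matrix.mul_assoc]
  rw [← Matrix.mul_assoc g gi (Y * g), h, Matrix.one_mul]

lemma key {n : ℕ} (U : Set (Fin n → ℂ)) (hUopen : IsOpen U) {u : Fin n → ℂ} (hu : u ∈ U)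
    (j : Fin n) (Bk γi G Bh : (Fin n → ℂ) → Matrix (Fin n) (Fin n) ℂ)
    (hBk : ∀ a b, DifferentiableAt ℂ (fun v => Bk v a b) u)
    (hGd : ∀ a b, DifferentiableAt ℂ (fun v => G v a b) u)
    (hGinv : ∀ v ∈ U, IsUnit (G v))
    (hmpdG : mpd j G u = γi u * G u)
    (hBh : ∀ v, Bh v = (G v)⁻¹ * Bk v * G v) :
    mpd j Bh u = (G u)⁻¹ * (mpd j Bk u - (γi u * Bk u - Bk u * γi u)) * G u := by
  have hudet : ∀ v ∈ U, IsUnit (G v).det :=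
    fun v hv => (Matrix.isUnit_iff_isUnit_det _).mp (hGinv v hv)
  have hrel : ∀ v ∈ U, Bk v * G v = G v * Bh v := by
    intro v hv
    rw [hBh, ← Matrix.mul_assoc, ← Matrix.mul_assoc, Matrix.mul_nonsing_inv _ (hudet v hv),
      Matrix.one_mul]
  have hBhdiff : ∀ a b, DifferentiableAt ℂ (fun v => Bh v a b) u := by
    intro a b
    have he : (fun v => Bh v a b) = fun v => ((G v)⁻¹ * Bk v * G v) a b :=
      funext fun v => by rw [hBh]
    rw [he]
    exact diffAt_mul_entry _ _
      (diffAt_mul_entry _ _ (diffAt_inv_entry G hGd (hGinv u hu)) hBk) hGd a b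
  have h1 : mpd j (fun v => Bk v * G v) u = mpd j (fun v => G v * Bh v) u :=
    mpd_congr j _ _ hUopen hu hrel
  have e : mpd j Bk u * G u + Bk u * mpd j G u = mpd j G u * Bh u + G u * mpd j Bh u := by
    rw [← mpd_mul j Bk G hBk hGd, ← mpd_mul j G Bh hGd hBhdiff]; exact h1
  rw [hmpdG] at e
  rw [Matrix.mul_assoc (γi u) (G u) (Bh u), ← hrel u hu] at e
  have e2 : G u * mpd j Bh u
      = mpd j Bk u * G u + Bk u * (γi u * G u) - γi u * (Bk u * G u) := by
    rw [eq_sub_iff_add_eq, add_comm]; exact e.symm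
  have e3 : mpd j Bh u = (G u)⁻¹ * (G u * mpd j Bh u) := by
    rw [← Matrix.mul_assoc, Matrix.nonsing_inv_mul _ (hudet u hu), Matrix.one_mul]
  rw [e3, e2, Matrix.mul_assoc]
  congr 1
  noncomm_ring

/-- with `G` invertible solving `∂_j G = γ_j G`, and `B̂_k := G⁻¹ B_k G`,
the pair `(B_k, γ_k)` satisfies the non-normalized Schlesinger equations iff the `B̂_k`
satisfy the normalized Schlesinger equations. -/
theorem stmt7 {n : ℕ} (U : Set (Fin n → ℂ)) (hUopen : IsOpen U)
    (hdist : ∀ u ∈ U, ∀ a b : Fin n, a ≠ b → u a ≠ u b)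
    (B γ : Fin n → (Fin n → ℂ) → Matrix (Fin n) (Fin n) ℂ)
    (hBdiff : ∀ k, ∀ a b : Fin n, DifferentiableOn ℂ (fun u => B k u a b) U)
    (hγdiff : ∀ k, ∀ a b : Fin n, DifferentiableOn ℂ (fun u => γ k u a b) U)
    (G : (Fin n → ℂ) → Matrix (Fin n) (Fin n) ℂ)
    (hGdiff : ∀ a b : Fin n, DifferentiableOn ℂ (fun u => G u a b) U)
    (hGinv : ∀ u ∈ U, IsUnit (G u))
    (hG : ∀ u ∈ U, ∀ j : Fin n, mpd j G u = γ j u * G u)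
    (Bhat : Fin n → (Fin n → ℂ) → Matrix (Fin n) (Fin n) ℂ)
    (hBhat : ∀ k u, Bhat k u = (G u)⁻¹ * B k u * G u) :
    (∀ u ∈ U,
      (∀ i k : Fin n, i ≠ k →
        mpd i (B k) u
          = (u i - u k)⁻¹ • (B i u * B k u - B k u * B i u)
            + (γ i u * B k u - B k u * γ i u))
      ∧ (∀ i : Fin n,
        mpd i (B i) u
          = -(∑ k ∈ Finset.univ.erase i,
                (u i - u k)⁻¹ • (B i u * B k u - B k u * B i u))
            + (γ i u * B i u - B i u * γ i u)))
    ↔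
    (∀ u ∈ U,
      (∀ i k : Fin n, i ≠ k →
        mpd i (Bhat k) u
          = (u i - u k)⁻¹ • (Bhat i u * Bhat k u - Bhat k u * Bhat i u))
      ∧ (∀ i : Fin n,
        mpd i (Bhat i) u
          = -(∑ k ∈ Finset.univ.erase i,
                (u i - u k)⁻¹ • (Bhat i u * Bhat k u - Bhat k u * Bhat i u)))) := by
  refine forall_congr' fun u => imp_congr_right fun hu => ?_
  have hdet : IsUnit (G u).det := (Matrix.isUnit_iff_isUnit_det _).mp (hGinv u hu)
  have hmul1 : G u * (G u)⁻¹ = 1 := Matrix.mul_nonsing_inv _ hdet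
  have hGdA : ∀ a b, DifferentiableAt ℂ (fun v => G v a b) u :=
    fun a b => (hGdiff a b).differentiableAt (hUopen.mem_nhds hu)
  have hBdA : ∀ k a b, DifferentiableAt ℂ (fun v => B k v a b) u :=
    fun k a b => (hBdiff k a b).differentiableAt (hUopen.mem_nhds hu)
  have K : ∀ j k : Fin n, mpd j (Bhat k) u
      = (G u)⁻¹ * (mpd j (B k) u - (γ j u * B k u - B k u * γ j u)) * G u :=
    fun j k => key U hUopen hu j (B k) (γ j) G (Bhat k) (hBdA k) hGdA hGinv
      (hG u hu j) (fun v => hBhat k v)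
  have recov : ∀ Z : Matrix (Fin n) (Fin n) ℂ, G u * ((G u)⁻¹ * Z * G u) * (G u)⁻¹ = Z := by
    intro Z
    simp only [← Matrix.mul_assoc]
    rw [hmul1, Matrix.one_mul, Matrix.mul_assoc, hmul1, Matrix.mul_one]
  have cancel : ∀ X Y : Matrix (Fin n) (Fin n) ℂ,
      ((G u)⁻¹ * X * G u = (G u)⁻¹ * Y * G u) ↔ X = Y := by
    intro X Y
    constructor
    · intro h
      have h2 := congrArg (fun Z => G u * Z * (G u)⁻¹) h
      simpa only [recov] using h2
    · intro h; rw [h]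
  have Chat : ∀ i k : Fin n, Bhat i u * Bhat k u - Bhat k u * Bhat i u
      = (G u)⁻¹ * (B i u * B k u - B k u * B i u) * G u := by
    intro i k
    rw [hBhat, hBhat, matConjMul _ _ _ _ hmul1, matConjMul _ _ _ _ hmul1,
      ← Matrix.sub_mul, ← Matrix.mul_sub]
  have conj_smul : ∀ (c : ℂ) (M : Matrix (Fin n) (Fin n) ℂ),
      c • ((G u)⁻¹ * M * G u) = (G u)⁻¹ * (c • M) * G u := by
    intro c M; rw [← Matrix.smul_mul, ← Matrix.mul_smul]
  refine and_congr ?_ ?_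
  · refine forall_congr' fun i => forall_congr' fun k => imp_congr_right fun hik => ?_
    rw [K i k, Chat i k, conj_smul, cancel, sub_eq_iff_eq_add]
  · refine forall_congr' fun i => ?_
    have hs : ∑ k ∈ Finset.univ.erase i,
          (u i - u k)⁻¹ • (Bhat i u * Bhat k u - Bhat k u * Bhat i u)
        = (G u)⁻¹ * (∑ k ∈ Finset.univ.erase i,
            (u i - u k)⁻¹ • (B i u * B k u - B k u * B i u)) * G u := by
      rw [Finset.mul_sum, Finset.sum_mul]
      exact Finset.sum_congr rfl fun k _ => by rw [Chat i k, conj_smul]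
    rw [K i i, hs, ← Matrix.neg_mul, ← Matrix.mul_neg, cancel, sub_eq_iff_eq_add]
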